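/- Let G be a graph, a, b ∈ V(G), P a longest ab-path in G oriented from a to b, and H a component of G − V(P). If u ∈ N_G(V(H)), then the successor u⁺ of u on P (if it exists) is not in N_G(V(H)). -/

import Mathlib

open SimpleGraph

variable {V : Type*}

/-- The number of connected components after deleting the vertex set `S`. -/
noncomputable def omegaDel [Fintype V] (G : SimpleGraph V) (S : Finset V) : ℕ :=
  Nat.card ((G.induce ((S : Set V)ᶜ)).ConnectedComponent)

/-- `G` is `m`-connected. -/
def IsKConn [Fintype V] (G : SimpleGraph V) (m : ℕ) : Prop :=
  m < Fintype.card V ∧ ∀ S : Finset V, S.card < m → (G.induce ((S : Set V)ᶜ)).Connected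

/-- The independence number of `G`. -/
noncomputable def alphaNum [Fintype V] (G : SimpleGraph V) : ℕ :=
  sSup {n | ∃ s : Finset V, (∀ a ∈ s, ∀ b ∈ s, ¬ G.Adj a b) ∧ s.card = n}

/-- The minimum degree of `G`. -/
noncomputable def minDeg [Fintype V] (G : SimpleGraph V) : ℕ :=
  sInf {d | ∃ v : V, (G.neighborSet v).ncard = d}

/-- The graph `K₂ ∪ kK₁`. -/
def K2kK1 (k : ℕ) : SimpleGraph (Fin 2 ⊕ Fin k) :=
  SimpleGraph.fromRel fun a b => a.isLeft ∧ b.isLeft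

/-- `G` contains no induced copy of `H`. -/
def IndFree {W : Type*} (H : SimpleGraph W) (G : SimpleGraph V) : Prop :=
  IsEmpty (H ↪g G)

/-- `G` has a hamiltonian cycle. -/
def Ham [DecidableEq V] (G : SimpleGraph V) : Prop :=
  ∃ (a : V) (p : G.Walk a a), p.IsHamiltonianCycle

/-- `G` is hamiltonian-connected. -/
def HamConn [DecidableEq V] (G : SimpleGraph V) : Prop :=
  ∀ a b : V, a ≠ b → ∃ p : G.Walk a b, p.IsHamiltonian

/-- The Petersen graph. -/
def petersen : SimpleGraph (ZMod 5 ⊕ ZMod 5) :=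
  SimpleGraph.fromRel fun a b =>
    match a, b with
    | Sum.inl i, Sum.inl j => i = j + 1
    | Sum.inr i, Sum.inr j => i = j + 2
    | Sum.inl i, Sum.inr j => i = j
    | _, _ => False

private lemma walk_exists' {V : Type*} {n : ℕ} (G : SimpleGraph V) (f : Fin (n+1) → V)
    (hadj : ∀ i : Fin n, G.Adj (f i.castSucc) (f i.succ))
    (hinj : Function.Injective f) :
    ∀ k : ℕ, ∀ (hk : k < n+1), ∀ j : ℕ, ∀ (hj : j ≤ k),
      ∃ w : G.Walk (f ⟨j, Nat.lt_of_le_of_lt hj hk⟩) (f ⟨k, hk⟩),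
        w.length = k - j ∧ w.IsPath ∧
        ∀ x ∈ w.support, ∃ m, j ≤ m ∧ m ≤ k ∧ ∃ (hm : m < n+1), x = f ⟨m, hm⟩ := by
  intro k
  induction k with
  | zero =>
    intro hk j hj
    interval_cases j
    exact ⟨.nil, by simp, by simp, by
      intro x hx; simp only [Walk.support_nil, List.mem_singleton] at hx
      exact ⟨0, le_rfl, le_rfl, hk, hx⟩⟩
  | succ k ih =>
    intro hk j hj
    rcases Nat.lt_or_ge j (k+1) with h | h
    · have hjk : j ≤ k := by omega
      obtain ⟨w, hlen, hpath, hsupp⟩ := ih (by omega) j hjk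
      have hadj' : G.Adj (f ⟨k, by omega⟩) (f ⟨k+1, hk⟩) := hadj ⟨k, by omega⟩
      refine ⟨w.concat hadj', by simp [hlen]; omega, ?_, ?_⟩
      · rw [Walk.isPath_def, Walk.support_concat,
          List.nodup_append]
        refine ⟨hpath.support_nodup, List.nodup_singleton _, ?_⟩
        intro x hx x' hx' hxx
        rw [← hxx] at hx'
        obtain ⟨m, hm1, hm2, hm3, rfl⟩ := hsupp x hx
        simp only [List.mem_singleton] at hx'
        have := hinj hx'
        simp only [Fin.mk.injEq] at this
        omega
      · intro x hx
        rw [Walk.support_concat, List.mem_append] at hx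
        rcases hx with hx | hx
        · obtain ⟨m, hm1, hm2, hm3, rfl⟩ := hsupp x hx
          exact ⟨m, hm1, by omega, hm3, rfl⟩
        · simp only [List.mem_singleton] at hx
          exact ⟨k+1, by omega, le_rfl, hk, hx⟩
    · have : j = k + 1 := by omega
      subst this
      exact ⟨.nil, by simp, by simp, by
        intro x hx; simp only [Walk.support_nil, List.mem_singleton] at hx
        exact ⟨k+1, le_rfl, le_rfl, hk, hx⟩⟩

/-- On a longest `ab`-path, the successor of a neighbor of a component of `G - P`
is not a neighbor of that component. -/
theorem stmt_8 {V : Type*} [Fintype V] (G : SimpleGraph V) (a b : V) (n : ℕ)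
    (f : Fin (n + 1) → V) (hinj : Function.Injective f)
    (ha : f 0 = a) (hb : f (Fin.last n) = b)
    (hadj : ∀ i : Fin n, G.Adj (f i.castSucc) (f i.succ))
    (hlong : ∀ q : G.Walk a b, q.IsPath → q.length ≤ n)
    (H : (G.induce (Set.range f)ᶜ).ConnectedComponent)
    (i : Fin n) (hu : ∃ h ∈ Subtype.val '' H.supp, G.Adj (f i.castSucc) h) :
    ¬ ∃ h ∈ Subtype.val '' H.supp, G.Adj (f i.succ) h := by
  obtain ⟨h₁, ⟨x₁, hx₁, rfl⟩, hadj₁⟩ := hu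
  rintro ⟨h₂, ⟨x₂, hx₂, rfl⟩, hadj₂⟩
  classical
  -- the middle path inside the component
  have hreach : (G.induce (Set.range f)ᶜ).Reachable x₁ x₂ := by
    rw [SimpleGraph.ConnectedComponent.mem_supp_iff] at hx₁ hx₂
    exact SimpleGraph.ConnectedComponent.exact (hx₁.trans hx₂.symm)
  obtain ⟨w₀⟩ := hreach
  set p₀ := w₀.toPath with hp₀
  set mid : G.Walk (x₁ : V) (x₂ : V) :=
    (p₀ : (G.induce (Set.range f)ᶜ).Walk x₁ x₂).map
      (SimpleGraph.Embedding.induce (Set.range f)ᶜ).toHom with hmid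
  have hmidpath : mid.IsPath :=
    SimpleGraph.Walk.map_isPath_of_injective (Subtype.val_injective) p₀.2
  have hmidsupp : ∀ x ∈ mid.support, x ∉ Set.range f := by
    intro x hx
    have hx2 : x ∈ ((p₀ : (G.induce (Set.range f)ᶜ).Walk x₁ x₂).map
        (SimpleGraph.Embedding.induce (Set.range f)ᶜ).toHom).support := hx
    rw [Walk.support_map, List.mem_map] at hx2
    obtain ⟨y, _, rfl⟩ := hx2
    exact y.2
  have hin : (i : ℕ) < n + 1 := by omega
  have hin' : (i : ℕ) + 1 < n + 1 := by omega
  obtain ⟨pre, hprelen, hprepath, hpresupp⟩ :=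
    walk_exists' G f hadj hinj i hin 0 (Nat.zero_le _)
  obtain ⟨suf, hsuflen, hsufpath, hsufsupp⟩ :=
    walk_exists' G f hadj hinj n (by omega) ((i : ℕ) + 1) (by omega)
  have adj₁' : G.Adj (f ⟨(i : ℕ), hin⟩) (x₁ : V) := hadj₁
  have adj₂' : G.Adj (x₂ : V) (f ⟨(i : ℕ) + 1, hin'⟩) := hadj₂.symm
  set Q : G.Walk (f ⟨0, by omega⟩) (f ⟨n, by omega⟩) :=
    pre.append (Walk.cons adj₁' (mid.append (Walk.cons adj₂' suf))) with hQ
  have e₁ : f ⟨0, by omega⟩ = a := by rw [← ha]; congr 1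
  have e₂ : f ⟨n, by omega⟩ = b := by rw [← hb]; congr 1
  have hQsupp : Q.support = pre.support ++ (mid.support ++ suf.support) := by
    rw [hQ, Walk.support_append, Walk.support_cons, List.tail_cons,
      Walk.support_append, Walk.support_cons, List.tail_cons]
  have hQpath : Q.IsPath := by
    rw [Walk.isPath_def, hQsupp, List.nodup_append, List.nodup_append]
    refine ⟨hprepath.support_nodup, ⟨hmidpath.support_nodup, hsufpath.support_nodup, ?_⟩, ?_⟩
    · -- mid disjoint suf
      intro x hx x' hx' hxx
      rw [← hxx] at hx'
      obtain ⟨m, _, _, hm, rfl⟩ := hsufsupp x hx'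
      exact hmidsupp _ hx ⟨⟨m, hm⟩, rfl⟩
    · -- pre disjoint (mid ++ suf)
      intro x hx x' hx' hxx
      rw [← hxx] at hx'
      obtain ⟨m, _, hm2, hm, rfl⟩ := hpresupp x hx
      rw [List.mem_append] at hx'
      rcases hx' with hx' | hx'
      · exact hmidsupp _ hx' ⟨⟨m, hm⟩, rfl⟩
      · obtain ⟨m', hm'1, _, hm', heq⟩ := hsufsupp _ hx'
        have := hinj heq
        simp only [Fin.mk.injEq] at this
        omega
  have hQlen : Q.length = n + 1 + mid.length := by
    rw [hQ]
    simp only [Walk.length_append, Walk.length_cons]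
    omega
  have := hlong (Q.copy e₁ e₂) (by rwa [Walk.isPath_copy])
  rw [Walk.length_copy, hQlen] at this
  omega
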